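/- Let X and Y be independent rate-1 exponential random variables, R > 0, and define user 2's minimal total transmit power W(X,Y) = (e^R − 1)/Y if Y ≥ X; W(X,Y) = e^R(e^R − 1)/X if Y ≤ e^{−2R}X; and W(X,Y) = 2e^R/√(XY) − e^R/X − 1/Y otherwise. Define τ = ∫₁^{e^R} (y − 1)·( min{e^{2R}, g₂(y)} − max{1, g₁(y)} ) dy, where g₁(y) = (2e^{2R} − e^R y − 2e^R√(e^{2R} − e^R y))/y² and g₂(y) = (2e^{2R} − e^R y + 2e^R√(e^{2R} − e^R y))/y². Then the power outage probability P^out(ρ) = P(W(X,Y) ≥ ρ) satisfies lim_{ρ→∞} ρ² · P^out(ρ) = (e^R − 1)² + τ. -/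

import Mathlib

open MeasureTheory ProbabilityTheory Filter

set_option maxHeartbeats 1000000

/-- User 2's minimal total transmit power as a function of its channel gains `a = h_{2,1}`,
`b = h_{2,2}`: pure OMA if `b ≥ a`, pure NOMA if `b ≤ e^{-2R} a`, hybrid NOMA otherwise. -/
noncomputable def W (R a b : ℝ) : ℝ :=
  if a ≤ b then (Real.exp R - 1) / b
  else if b ≤ Real.exp (-(2 * R)) * a then Real.exp R * (Real.exp R - 1) / a
  else 2 * Real.exp R / Real.sqrt (a * b) - Real.exp R / a - 1 / b

/-- The function `g₁` from Lemma 5. -/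
noncomputable def g1 (R y : ℝ) : ℝ :=
  (2 * Real.exp (2 * R) - Real.exp R * y -
      2 * Real.exp R * Real.sqrt (Real.exp (2 * R) - Real.exp R * y)) / y ^ 2

/-- The function `g₂` from Lemma 5. -/
noncomputable def g2 (R y : ℝ) : ℝ :=
  (2 * Real.exp (2 * R) - Real.exp R * y +
      2 * Real.exp R * Real.sqrt (Real.exp (2 * R) - Real.exp R * y)) / y ^ 2

/-! ### Auxiliary algebraic lemmas -/

lemma exp_two_mul' (R : ℝ) : Real.exp (2*R) = Real.exp R ^ 2 := by
  rw [two_mul, Real.exp_add]; ring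

lemma one_lt_exp' {R : ℝ} (hR : 0 < R) : 1 < Real.exp R := by
  rw [show (1:ℝ) = Real.exp 0 from (Real.exp_zero).symm]; exact Real.exp_lt_exp.2 hR

lemma g1_le_one {R y : ℝ} (h1 : 1 ≤ y) (h2 : y ≤ Real.exp R) : g1 R y ≤ 1 := by
  set E := Real.exp R with hE
  have hy : (0:ℝ) < y := lt_of_lt_of_le one_pos h1
  have hD : 0 ≤ E^2 - E*y := by nlinarith [Real.exp_pos R]
  set s := Real.sqrt (E^2 - E*y) with hs
  have hs2 : s^2 = E^2 - E*y := Real.sq_sqrt hD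
  have hs0 : 0 ≤ s := Real.sqrt_nonneg _
  have hsE : E - y ≤ s := by nlinarith
  rw [g1, exp_two_mul', div_le_one (by positivity), ← hE, ← hs]
  nlinarith

lemma one_le_g2 {R y : ℝ} (h1 : 1 ≤ y) (h2 : y ≤ Real.exp R) : 1 ≤ g2 R y := by
  set E := Real.exp R with hE
  have hy : (0:ℝ) < y := lt_of_lt_of_le one_pos h1
  have hD : 0 ≤ E^2 - E*y := by nlinarith [Real.exp_pos R]
  set s := Real.sqrt (E^2 - E*y) with hs
  have hs2 : s^2 = E^2 - E*y := Real.sq_sqrt hD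
  have hs0 : 0 ≤ s := Real.sqrt_nonneg _
  rw [g2, exp_two_mul', le_div_iff₀ (by positivity), ← hE, ← hs]
  nlinarith

lemma hyb_iff {R a b : ℝ} (hb : 0 < b) (hba : b < a) :
    (1 ≤ 2 * Real.exp R / Real.sqrt (a * b) - Real.exp R / a - 1 / b)
      ↔ (b + 1 ≤ Real.exp R ∧ a ≤ b * g2 R (b+1)) := by
  set E := Real.exp R with hE
  have hEpos : 0 < E := Real.exp_pos R
  have ha : 0 < a := hb.trans hba
  set u := Real.sqrt (a/b) with hu
  have hu2 : u^2 = a/b := Real.sq_sqrt (div_nonneg ha.le hb.le)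
  have hu1 : 1 < u := by
    rw [hu, show (1:ℝ) = Real.sqrt 1 from (Real.sqrt_one).symm]
    exact Real.sqrt_lt_sqrt one_pos.le ((one_lt_div hb).2 hba)
  have hu0 : 0 < u := one_pos.trans hu1
  have haeq : a = b * u^2 := by rw [hu2]; field_simp
  have hab : Real.sqrt (a*b) = b * u := by
    rw [show a*b = (b*u)^2 by rw [haeq]; ring]
    exact Real.sqrt_sq (by positivity)
  set y := b + 1 with hy
  have hy1 : 1 < y := by simp [hy]; linarith
  have hy0 : 0 < y := one_pos.trans hy1
  have step1 : (1 ≤ 2 * E / Real.sqrt (a * b) - E / a - 1 / b)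
      ↔ y * u^2 - 2*E*u + E ≤ 0 := by
    rw [hab, haeq,
      show 2*E/(b*u) - E/(b*u^2) - 1/b = ((2*E*u - E) - u^2) / (b*u^2) by field_simp,
      le_div_iff₀ (by positivity)]
    constructor <;> intro h <;> nlinarith
  rw [step1]
  set s := Real.sqrt (E^2 - E*y) with hs
  have hg2 : g2 R y = (E^2 + (E^2 - E*y) + 2*E*s)/y^2 := by
    rw [g2, exp_two_mul', ← hE, ← hs]; ring
  have hs0 : 0 ≤ s := Real.sqrt_nonneg _
  have hgiff : a ≤ b * g2 R y ↔ a * y^2 ≤ b * (E^2 + (E^2 - E*y) + 2*E*s) := by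
    rw [hg2, ← mul_div_assoc, le_div_iff₀ (by positivity : (0:ℝ) < y^2)]
  constructor
  · intro h
    have hq : (y*u - E)^2 ≤ E^2 - E*y := by nlinarith
    have hD : 0 ≤ E^2 - E*y := le_trans (sq_nonneg _) hq
    have hyE : y ≤ E := by nlinarith
    have hs2 : s^2 = E^2 - E*y := Real.sq_sqrt hD
    have h2 : y*u - E ≤ s := by nlinarith
    have h3 : (y*u)^2 ≤ (E+s)^2 := by nlinarith [mul_pos hy0 hu0]
    refine ⟨hyE, hgiff.2 ?_⟩
    have h4 : a * y^2 = b * (y*u)^2 := by rw [haeq]; ring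
    have h5 : b*(E^2 + (E^2 - E*y) + 2*E*s) = b*(E+s)^2 := by linear_combination (-b) * hs2
    linarith [mul_le_mul_of_nonneg_left h3 hb.le]
  · rintro ⟨hyE, ha2⟩
    have hD : 0 ≤ E^2 - E*y := by nlinarith
    have hs2 : s^2 = E^2 - E*y := Real.sq_sqrt hD
    have hsE : E - y ≤ s := by nlinarith
    have key : a * y^2 ≤ b * (E^2 + (E^2 - E*y) + 2*E*s) := hgiff.1 ha2
    have h4 : a * y^2 = b * (y*u)^2 := by rw [haeq]; ring
    have h5 : b*(E^2 + (E^2 - E*y) + 2*E*s) = b*(E+s)^2 := by linear_combination (-b) * hs2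
    have hkey2 : (y*u)^2 ≤ (E+s)^2 := le_of_mul_le_mul_left (by linarith) hb
    have hup : y*u ≤ E + s := by nlinarith [mul_pos hy0 hu0]
    have hlow : E - s ≤ y*u := by nlinarith [mul_nonneg hy0.le (by linarith : (0:ℝ) ≤ u - 1)]
    nlinarith

/-! ### Measurability and scaling of `W` -/

lemma measurable_W (R : ℝ) : Measurable (fun p : ℝ×ℝ => W R p.1 p.2) := by
  unfold W
  apply Measurable.ite (measurableSet_le measurable_fst measurable_snd)
  · exact measurable_const.div measurable_snd
  apply Measurable.ite (measurableSet_le measurable_snd (measurable_const.mul measurable_fst))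
  · exact measurable_const.div measurable_fst
  · apply Measurable.sub
    apply Measurable.sub
    · exact measurable_const.div ((measurable_fst.mul measurable_snd).sqrt)
    · exact measurable_const.div measurable_fst
    · exact measurable_const.div measurable_snd

lemma W_scale {R ρ a b : ℝ} (hρ : 0 < ρ) : W R (ρ⁻¹ * a) (ρ⁻¹ * b) = ρ * W R a b := by
  have hρ' : 0 < ρ⁻¹ := inv_pos.2 hρ
  have h1 : (ρ⁻¹ * a ≤ ρ⁻¹ * b) ↔ (a ≤ b) := mul_le_mul_iff_right₀ hρ'
  have h2 : (ρ⁻¹ * b ≤ Real.exp (-(2*R)) * (ρ⁻¹*a)) ↔ b ≤ Real.exp (-(2*R))*a := by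
    rw [show Real.exp (-(2*R)) * (ρ⁻¹*a) = ρ⁻¹*(Real.exp (-(2*R))*a) by ring]
    exact mul_le_mul_iff_right₀ hρ'
  have h3 : Real.sqrt (ρ⁻¹*a*(ρ⁻¹*b)) = ρ⁻¹ * Real.sqrt (a*b) := by
    rw [show ρ⁻¹*a*(ρ⁻¹*b) = (ρ⁻¹)^2*(a*b) by ring, Real.sqrt_mul (sq_nonneg _),
      Real.sqrt_sq hρ'.le]
  simp only [W, h1, h2, h3]
  split_ifs with hc1 hc2
  · simp [div_eq_mul_inv, mul_inv, inv_inv]; ring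
  · simp [div_eq_mul_inv, mul_inv, inv_inv]; ring
  · simp [div_eq_mul_inv, mul_inv, inv_inv]; ring

/-! ### The slice sets and their measures -/

lemma cond_noma_iff {R a b : ℝ} : b ≤ Real.exp (-(2*R)) * a ↔ Real.exp R^2 * b ≤ a := by
  rw [Real.exp_neg, exp_two_mul', inv_mul_eq_div, le_div_iff₀ (pow_pos (Real.exp_pos R) 2)]
  constructor <;> intro h <;> linarith

lemma slice_eq {R b : ℝ} (hR : 0 < R) (hb : 0 < b) (hbc : b ≤ Real.exp R - 1) :
    {a : ℝ | 0 ≤ a ∧ 1 ≤ W R a b} =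
      (Set.Icc 0 b ∪ Set.Ioo b (Real.exp R^2 * b) ∩ Set.Iic (b * g2 R (b+1))) ∪
        Set.Icc (Real.exp R^2 * b) (Real.exp R * (Real.exp R - 1)) := by
  have hE1 : 1 < Real.exp R := one_lt_exp' hR
  have hE0 : 0 < Real.exp R := Real.exp_pos R
  have hE21 : 1 < Real.exp R ^ 2 := by nlinarith
  ext a
  simp only [Set.mem_setOf_eq, Set.mem_union, Set.mem_inter_iff, Set.mem_Icc, Set.mem_Ioo,
    Set.mem_Iic]
  by_cases h1 : a ≤ b
  · rw [W, if_pos h1]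
    rw [one_le_div hb]
    constructor
    · rintro ⟨h0, -⟩; exact Or.inl (Or.inl ⟨h0, h1⟩)
    · rintro ((⟨h0, -⟩ | ⟨⟨hba, -⟩, -⟩) | ⟨hba, -⟩)
      · exact ⟨h0, hbc⟩
      · linarith
      · nlinarith
  · push_neg at h1
    rw [W, if_neg (not_le.2 h1)]
    by_cases h2 : b ≤ Real.exp (-(2*R)) * a
    · rw [if_pos h2]
      rw [cond_noma_iff] at h2
      have ha : 0 < a := hb.trans h1
      rw [one_le_div ha]
      constructor
      · rintro ⟨-, hE'⟩; exact Or.inr ⟨h2, hE'⟩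
      · rintro ((⟨-, hab⟩ | ⟨⟨-, hlt⟩, -⟩) | ⟨-, hE'⟩)
        · linarith
        · linarith
        · exact ⟨ha.le, hE'⟩
    · rw [if_neg h2]
      rw [cond_noma_iff] at h2
      push_neg at h2
      rw [hyb_iff hb h1]
      constructor
      · rintro ⟨-, -, hg⟩; exact Or.inl (Or.inr ⟨⟨h1, h2⟩, hg⟩)
      · rintro ((⟨-, hab⟩ | ⟨⟨-, -⟩, hg⟩) | ⟨hba, -⟩)
        · linarith
        · exact ⟨(hb.trans h1).le, by linarith, hg⟩
        · linarith

lemma slice_empty {R b : ℝ} (hR : 0 < R) (hb : 0 ≤ b) (hbc : Real.exp R - 1 < b) :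
    {a : ℝ | 0 ≤ a ∧ 1 ≤ W R a b} = ∅ := by
  have hE1 : 1 < Real.exp R := one_lt_exp' hR
  have hE0 : 0 < Real.exp R := Real.exp_pos R
  have hb0 : 0 < b := lt_of_le_of_lt (by nlinarith) hbc
  ext a
  simp only [Set.mem_setOf_eq, Set.mem_empty_iff_false, iff_false, not_and]
  intro h0 hW
  by_cases h1 : a ≤ b
  · rw [W, if_pos h1, one_le_div hb0] at hW; linarith
  · push_neg at h1
    rw [W, if_neg (not_le.2 h1)] at hW
    by_cases h2 : b ≤ Real.exp (-(2*R)) * a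
    · rw [if_pos h2] at hW
      rw [cond_noma_iff] at h2
      have ha : 0 < a := hb0.trans h1
      rw [one_le_div ha] at hW
      nlinarith
    · rw [if_neg h2] at hW
      rw [hyb_iff hb0 h1] at hW
      linarith [hW.1]

lemma ofReal_eq_ofReal_max (x : ℝ) : ENNReal.ofReal x = ENNReal.ofReal (max x 0) := by
  rcases le_total x 0 with h | h
  · rw [max_eq_right h, ENNReal.ofReal_eq_zero.2 h, eq_comm, ENNReal.ofReal_eq_zero]
  · rw [max_eq_left h]

lemma vol_Ioo_inter_Iic {x y z : ℝ} (hxy : x ≤ y) (hxz : x ≤ z) :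
    volume (Set.Ioo x y ∩ Set.Iic z) = ENNReal.ofReal (min y z - x) := by
  rcases lt_or_ge z y with h | h
  · have : Set.Ioo x y ∩ Set.Iic z = Set.Ioc x z := by
      ext a; simp only [Set.mem_inter_iff, Set.mem_Ioo, Set.mem_Iic, Set.mem_Ioc]
      constructor
      · rintro ⟨⟨h1, -⟩, h3⟩; exact ⟨h1, h3⟩
      · rintro ⟨h1, h2⟩; exact ⟨⟨h1, lt_of_le_of_lt h2 h⟩, h2⟩
    rw [this, Real.volume_Ioc, min_eq_right h.le]
  · have : Set.Ioo x y ∩ Set.Iic z = Set.Ioo x y :=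
      Set.inter_eq_left.2 (fun a ha => le_trans ha.2.le h)
    rw [this, Real.volume_Ioo, min_eq_left h]

lemma slice_vol {R b : ℝ} (hR : 0 < R) (hb : 0 < b) (hbc : b ≤ Real.exp R - 1) :
    volume {a : ℝ | 0 ≤ a ∧ 1 ≤ W R a b} =
      ENNReal.ofReal b + ENNReal.ofReal (min (Real.exp R^2 * b) (b * g2 R (b+1)) - b) +
        ENNReal.ofReal (max (Real.exp R * (Real.exp R - 1) - Real.exp R^2 * b) 0) := by
  have hE1 : 1 < Real.exp R := one_lt_exp' hR
  have hE0 : 0 < Real.exp R := Real.exp_pos R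
  have hE21 : 1 < Real.exp R ^ 2 := by nlinarith
  have hg2b : 1 ≤ g2 R (b+1) := one_le_g2 (by linarith) (by linarith)
  rw [slice_eq hR hb hbc]
  have hd1 : Disjoint (Set.Icc (0:ℝ) b)
      (Set.Ioo b (Real.exp R^2*b) ∩ Set.Iic (b * g2 R (b+1))) := by
    rw [Set.disjoint_left]; rintro a ⟨-, h2⟩ ⟨⟨h3, -⟩, -⟩; exact absurd h2 (not_le.2 h3)
  have hd2 : Disjoint (Set.Icc (0:ℝ) b ∪ Set.Ioo b (Real.exp R^2*b) ∩ Set.Iic (b * g2 R (b+1)))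
      (Set.Icc (Real.exp R^2*b) (Real.exp R * (Real.exp R - 1))) := by
    rw [Set.disjoint_left]
    rintro a (⟨-, h2⟩ | ⟨⟨-, h2⟩, -⟩) ⟨h3, -⟩
    · nlinarith
    · exact absurd h3 (not_le.2 h2)
  have hm2 : MeasurableSet (Set.Ioo b (Real.exp R^2*b) ∩ Set.Iic (b * g2 R (b+1))) :=
    measurableSet_Ioo.inter measurableSet_Iic
  rw [measure_union hd2 measurableSet_Icc, measure_union hd1 hm2,
    vol_Ioo_inter_Iic (by nlinarith) (by nlinarith), Real.volume_Icc, Real.volume_Icc]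
  rw [sub_zero, ofReal_eq_ofReal_max
    (Real.exp R * (Real.exp R - 1) - Real.exp R^2*b)]

/-! ### The volume of the limiting region -/

lemma contOn_f2 (R : ℝ) (s : Set ℝ) (hs : ∀ x ∈ s, x + 1 ≠ 0) :
    ContinuousOn (fun b : ℝ => min (Real.exp R^2 * b) (b * g2 R (b+1)) - b) s := by
  apply ContinuousOn.sub _ continuousOn_id
  have hg2 : ContinuousOn (fun b : ℝ => g2 R (b+1)) s := by
    unfold g2
    apply ContinuousOn.div
    · fun_prop
    · fun_prop
    · intro x hx; exact pow_ne_zero 2 (hs x hx)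
  exact continuous_min.comp_continuousOn
    (((continuous_const.mul continuous_id).continuousOn).prodMk (continuousOn_id.mul hg2))

lemma volA {R : ℝ} (hR : 0 < R) :
    (volume : Measure (ℝ×ℝ)) {q : ℝ×ℝ | 1 ≤ W R q.1 q.2 ∧ 0 ≤ q.1 ∧ 0 ≤ q.2} =
      ENNReal.ofReal (∫ b in Set.Ioc (0:ℝ) (Real.exp R - 1), b) +
      ENNReal.ofReal (∫ b in Set.Ioc (0:ℝ) (Real.exp R - 1),
        (min (Real.exp R^2 * b) (b * g2 R (b+1)) - b)) +
      ENNReal.ofReal (∫ b in Set.Ioc (0:ℝ) (Real.exp R - 1),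
        max (Real.exp R * (Real.exp R - 1) - Real.exp R^2 * b) 0) := by
  have hE1 : 1 < Real.exp R := one_lt_exp' hR
  have hE0 : 0 < Real.exp R := Real.exp_pos R
  have hE21 : 1 < Real.exp R ^ 2 := by nlinarith
  set c := Real.exp R - 1 with hcdef
  have hc : 0 < c := by simp [hcdef]; linarith
  have hAm : MeasurableSet {q : ℝ×ℝ | 1 ≤ W R q.1 q.2 ∧ 0 ≤ q.1 ∧ 0 ≤ q.2} := by
    apply MeasurableSet.inter (measurableSet_le measurable_const (measurable_W R))
    exact (measurableSet_le measurable_const measurable_fst).inter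
      (measurableSet_le measurable_const measurable_snd)
  rw [Measure.volume_eq_prod, Measure.prod_apply_symm hAm]
  have key : ∀ b : ℝ, b ≠ 0 →
      volume ((fun a => (a, b)) ⁻¹' {q : ℝ×ℝ | 1 ≤ W R q.1 q.2 ∧ 0 ≤ q.1 ∧ 0 ≤ q.2}) =
      (Set.Ioc (0:ℝ) c).indicator (fun b =>
        ENNReal.ofReal b + ENNReal.ofReal (min (Real.exp R^2 * b) (b * g2 R (b+1)) - b) +
          ENNReal.ofReal (max (Real.exp R * (Real.exp R - 1) - Real.exp R^2 * b) 0)) b := by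
    intro b hb0
    rcases lt_trichotomy b 0 with hb | hb | hb
    · have h1 : ((fun a => (a, b)) ⁻¹' {q : ℝ×ℝ | 1 ≤ W R q.1 q.2 ∧ 0 ≤ q.1 ∧ 0 ≤ q.2}) = ∅ := by
        ext a; simp only [Set.mem_preimage, Set.mem_setOf_eq, Set.mem_empty_iff_false, iff_false]
        rintro ⟨-, -, h⟩; linarith
      rw [h1, Set.indicator_of_notMem (by simp [Set.mem_Ioc]; intro h; linarith)]
      simp
    · exact absurd hb hb0
    · have h1 : ((fun a => (a, b)) ⁻¹' {q : ℝ×ℝ | 1 ≤ W R q.1 q.2 ∧ 0 ≤ q.1 ∧ 0 ≤ q.2}) =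
          {a : ℝ | 0 ≤ a ∧ 1 ≤ W R a b} := by
        ext a; simp only [Set.mem_preimage, Set.mem_setOf_eq]
        constructor
        · rintro ⟨h2, h3, -⟩; exact ⟨h3, h2⟩
        · rintro ⟨h2, h3⟩; exact ⟨h3, h2, hb.le⟩
      rw [h1]
      rcases le_or_gt b c with hbc | hbc
      · rw [slice_vol hR hb hbc, Set.indicator_of_mem (Set.mem_Ioc.2 ⟨hb, hbc⟩)]
      · rw [slice_empty hR hb.le hbc,
          Set.indicator_of_notMem (by simp [Set.mem_Ioc]; intro h; linarith)]
        simp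
  have h0 : ∀ᵐ (b : ℝ), b ≠ 0 := by
    rw [ae_iff]
    simp only [ne_eq, not_not, Set.setOf_eq_eq_singleton]
    exact measure_singleton 0
  rw [lintegral_congr_ae (h0.mono fun b hb => key b hb),
    lintegral_indicator measurableSet_Ioc]
  have hm1 : Measurable fun b : ℝ => ENNReal.ofReal b := ENNReal.measurable_ofReal
  have mg2 : Measurable fun b : ℝ => g2 R (b+1) := by
    unfold g2
    exact ((measurable_const.sub (measurable_const.mul (measurable_id.add_const 1))).add
      (measurable_const.mul
        ((measurable_const.sub (measurable_const.mul (measurable_id.add_const 1))).sqrt))).div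
      ((measurable_id.add_const 1).pow_const 2)
  have hm2 : Measurable fun b : ℝ =>
      ENNReal.ofReal (min (Real.exp R^2 * b) (b * g2 R (b+1)) - b) :=
    ENNReal.measurable_ofReal.comp
      (((measurable_const.mul measurable_id).min (measurable_id.mul mg2)).sub measurable_id)
  rw [lintegral_add_left (f := fun b : ℝ =>
      ENNReal.ofReal b + ENNReal.ofReal (min (Real.exp R^2 * b) (b * g2 R (b+1)) - b)) (hm1.add hm2), lintegral_add_left hm1]
  have hint1 : IntegrableOn (fun b : ℝ => b) (Set.Ioc 0 c) :=
    (continuous_id.integrableOn_Icc).mono_set Set.Ioc_subset_Icc_self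
  have hint2 : IntegrableOn (fun b : ℝ => min (Real.exp R^2 * b) (b * g2 R (b+1)) - b)
      (Set.Ioc 0 c) := by
    apply ContinuousOn.integrableOn_Icc (contOn_f2 R _ ?_) |>.mono_set Set.Ioc_subset_Icc_self
    intro x hx; have := hx.1; positivity
  have hint3 : IntegrableOn (fun b : ℝ =>
      max (Real.exp R * (Real.exp R - 1) - Real.exp R^2 * b) 0) (Set.Ioc 0 c) := by
    apply Continuous.integrableOn_Icc ?_ |>.mono_set Set.Ioc_subset_Icc_self
    fun_prop
  have hnn2 : ∀ b ∈ Set.Ioc (0:ℝ) c, 0 ≤ min (Real.exp R^2 * b) (b * g2 R (b+1)) - b := by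
    intro b hb
    have h1 : 1 ≤ g2 R (b+1) := one_le_g2 (by linarith [hb.1]) (by
      have := hb.2; simp only [hcdef] at this ⊢; linarith)
    have hb0 : 0 < b := hb.1
    exact sub_nonneg.2 (le_min (by nlinarith) (by nlinarith))
  rw [← ofReal_integral_eq_lintegral_ofReal hint1
      ((ae_restrict_iff' measurableSet_Ioc).2 (ae_of_all _ fun b hb => hb.1.le)),
    ← ofReal_integral_eq_lintegral_ofReal hint2
      ((ae_restrict_iff' measurableSet_Ioc).2 (ae_of_all _ hnn2)),
    ← ofReal_integral_eq_lintegral_ofReal hint3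
      ((ae_restrict_iff' measurableSet_Ioc).2 (ae_of_all _ fun b hb => le_max_right _ _))]

/-! ### Evaluation of the three integrals -/

lemma J1 {R : ℝ} (hR : 0 < R) :
    (∫ b in Set.Ioc (0:ℝ) (Real.exp R - 1), b) = (Real.exp R - 1)^2/2 := by
  have hc : (0:ℝ) ≤ Real.exp R - 1 := by linarith [one_lt_exp' hR]
  rw [← intervalIntegral.integral_of_le hc, integral_id]
  norm_num

lemma J2 {R : ℝ} (hR : 0 < R) :
    (∫ b in Set.Ioc (0:ℝ) (Real.exp R - 1),
        (min (Real.exp R^2 * b) (b * g2 R (b+1)) - b)) =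
      ∫ y in (1:ℝ)..Real.exp R, (y - 1) * (min (Real.exp (2*R)) (g2 R y) - 1) := by
  have hc : (0:ℝ) ≤ Real.exp R - 1 := by linarith [one_lt_exp' hR]
  rw [← intervalIntegral.integral_of_le hc]
  have heq : Set.EqOn (fun b : ℝ => min (Real.exp R^2 * b) (b * g2 R (b+1)) - b)
      (fun b : ℝ => ((b+1) - 1) * (min (Real.exp (2*R)) (g2 R (b+1)) - 1))
      (Set.uIcc 0 (Real.exp R - 1)) := by
    intro b hb
    rw [Set.uIcc_of_le hc] at hb
    have hb0 : 0 ≤ b := hb.1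
    simp only
    rw [exp_two_mul', show min (Real.exp R^2 * b) (b * g2 R (b+1))
        = b * min (Real.exp R^2) (g2 R (b+1)) by
      rw [mul_min_of_nonneg _ _ hb0, mul_comm b (Real.exp R^2)]]
    ring
  rw [intervalIntegral.integral_congr heq,
    intervalIntegral.integral_comp_add_right
      (fun y => (y - 1) * (min (Real.exp (2*R)) (g2 R y) - 1)) 1,
    zero_add, sub_add_cancel]

lemma J3 {R : ℝ} (hR : 0 < R) :
    (∫ b in Set.Ioc (0:ℝ) (Real.exp R - 1),
        max (Real.exp R * (Real.exp R - 1) - Real.exp R^2 * b) 0) =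
      (Real.exp R - 1)^2/2 := by
  have hE1 : 1 < Real.exp R := one_lt_exp' hR
  have hE0 : 0 < Real.exp R := Real.exp_pos R
  have hc : (0:ℝ) ≤ Real.exp R - 1 := by linarith
  set E := Real.exp R with hE
  set c' := (E - 1)/E with hc'def
  have hc'0 : 0 ≤ c' := by positivity
  have hEne : E ≠ 0 := hE0.ne'
  have hEc' : E^2 * c' = E * (E - 1) := by rw [hc'def]; field_simp
  have hc'c : c' ≤ E - 1 := by
    rw [hc'def, div_le_iff₀ hE0]; nlinarith
  have hcont : Continuous fun b : ℝ => max (E * (E - 1) - E^2 * b) 0 :=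
    (continuous_const.sub (continuous_const.mul continuous_id)).max continuous_const
  rw [← intervalIntegral.integral_of_le hc,
    ← intervalIntegral.integral_add_adjacent_intervals (b := c')
      (hcont.intervalIntegrable _ _) (hcont.intervalIntegrable _ _)]
  have h1 : (∫ b in (0:ℝ)..c', max (E * (E - 1) - E^2 * b) 0)
      = ∫ b in (0:ℝ)..c', (E * (E - 1) - E^2 * b) := by
    apply intervalIntegral.integral_congr
    intro b hb
    rw [Set.uIcc_of_le hc'0] at hb
    have : E^2 * b ≤ E * (E-1) := by nlinarith [hb.2, sq_nonneg E]
    simp only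
    rw [max_eq_left (by linarith)]
  have h2 : (∫ b in c'..(E-1), max (E * (E - 1) - E^2 * b) 0)
      = ∫ b in c'..(E-1), (0:ℝ) := by
    apply intervalIntegral.integral_congr
    intro b hb
    rw [Set.uIcc_of_le hc'c] at hb
    have : E * (E-1) ≤ E^2 * b := by nlinarith [hb.1]
    simp only
    rw [max_eq_right (by linarith)]
  rw [h1, h2, intervalIntegral.integral_zero, add_zero,
    intervalIntegral.integral_sub (intervalIntegrable_const)
      ((Continuous.intervalIntegrable (by fun_prop) _ _ :
        IntervalIntegrable (fun b : ℝ => E^2*b) volume 0 c')),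
    intervalIntegral.integral_const, intervalIntegral.integral_const_mul, integral_id]
  simp only [smul_eq_mul, hc'def]
  field_simp
  ring

lemma tauint_nonneg {R : ℝ} (hR : 0 < R) :
    0 ≤ ∫ y in (1:ℝ)..Real.exp R, (y - 1) * (min (Real.exp (2*R)) (g2 R y) - 1) := by
  have hE1 : 1 < Real.exp R := one_lt_exp' hR
  have hE21 : (1:ℝ) ≤ Real.exp (2*R) := by
    rw [exp_two_mul']; nlinarith
  apply intervalIntegral.integral_nonneg hE1.le
  intro y hy
  have h1 : 1 ≤ g2 R y := one_le_g2 hy.1 hy.2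
  have : (1:ℝ) ≤ min (Real.exp (2*R)) (g2 R y) := le_min hE21 h1
  have hy1 : 0 ≤ y - 1 := by linarith [hy.1]
  nlinarith

/-! ### From the probability measure to the Lebesgue integral -/

noncomputable def pdfR (x : ℝ) : ℝ := if 0 ≤ x then Real.exp (-x) else 0

lemma pdfR_nonneg (x : ℝ) : 0 ≤ pdfR x := by
  unfold pdfR; split_ifs; exacts [(Real.exp_pos _).le, le_refl 0]

lemma measurable_pdfR : Measurable pdfR := by
  unfold pdfR
  exact Measurable.ite (measurableSet_le measurable_const measurable_id)
    (Real.measurable_exp.comp measurable_neg) measurable_const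

lemma exponentialPDF_eq_pdfR (x : ℝ) : exponentialPDF 1 x = ENNReal.ofReal (pdfR x) := by
  rw [exponentialPDF_eq, pdfR]
  split_ifs with h <;> simp

lemma expMeasure_prod :
    (expMeasure 1).prod (expMeasure 1)
      = ((volume : Measure ℝ).prod volume).withDensity
          (fun p => exponentialPDF 1 p.1 * exponentialPDF 1 p.2) := by
  haveI : IsProbabilityMeasure (expMeasure 1) := isProbabilityMeasure_gammaMeasure zero_lt_one one_pos
  have hmp : Measurable (exponentialPDF 1) := by
    have : exponentialPDF 1 = fun x => ENNReal.ofReal (pdfR x) := funext exponentialPDF_eq_pdfR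
    rw [this]; exact ENNReal.measurable_ofReal.comp measurable_pdfR
  apply Measure.prod_eq
  intro s t hs ht
  rw [withDensity_apply _ (hs.prod ht), ← Measure.prod_restrict,
    lintegral_prod_mul hmp.aemeasurable hmp.aemeasurable]
  have hem : expMeasure 1 = volume.withDensity (exponentialPDF 1) := rfl
  rw [hem, withDensity_apply _ hs, withDensity_apply _ ht]

lemma prob_eq {Ω : Type*} [MeasurableSpace Ω] (μ : Measure Ω) [IsProbabilityMeasure μ]
    (X Y : Ω → ℝ) (hX : Measurable X) (hY : Measurable Y) (hXY : IndepFun X Y μ)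
    (hXd : μ.map X = expMeasure 1) (hYd : μ.map Y = expMeasure 1)
    (R : ℝ) {ρ : ℝ} (hρ : 0 < ρ) :
    ρ ^ 2 * (μ {ω | ρ ≤ W R (X ω) (Y ω)}).toReal
      = ∫ q : ℝ×ℝ, Set.indicator {q : ℝ×ℝ | 1 ≤ W R q.1 q.2 ∧ 0 ≤ q.1 ∧ 0 ≤ q.2}
          (fun q => Real.exp (-(q.1/ρ)) * Real.exp (-(q.2/ρ))) q := by
  have hSmeas : MeasurableSet {q : ℝ×ℝ | ρ ≤ W R q.1 q.2} :=
    measurableSet_le measurable_const (measurable_W R)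
  have hmap : μ.map (fun ω => (X ω, Y ω)) = (μ.map X).prod (μ.map Y) :=
    (indepFun_iff_map_prod_eq_prod_map_map hX.aemeasurable hY.aemeasurable).1 hXY
  have h1 : μ {ω | ρ ≤ W R (X ω) (Y ω)}
      = ((expMeasure 1).prod (expMeasure 1)) {q : ℝ×ℝ | ρ ≤ W R q.1 q.2} := by
    rw [hXd, hYd] at hmap
    rw [← hmap, Measure.map_apply (hX.prodMk hY) hSmeas]
    rfl
  rw [h1, expMeasure_prod, withDensity_apply _ hSmeas, ← Measure.volume_eq_prod]
  have h3 : (∫⁻ q in {q : ℝ×ℝ | ρ ≤ W R q.1 q.2},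
        exponentialPDF 1 q.1 * exponentialPDF 1 q.2 ∂volume)
      = ∫⁻ q : ℝ×ℝ, ENNReal.ofReal (Set.indicator {q : ℝ×ℝ | ρ ≤ W R q.1 q.2}
          (fun q => pdfR q.1 * pdfR q.2) q) ∂volume := by
    rw [← lintegral_indicator hSmeas]
    congr 1; funext q
    rw [Set.indicator_apply, Set.indicator_apply]
    split_ifs
    · rw [exponentialPDF_eq_pdfR, exponentialPDF_eq_pdfR,
        ← ENNReal.ofReal_mul (pdfR_nonneg _)]
    · simp
  have h4 : (∫⁻ q : ℝ×ℝ, ENNReal.ofReal (Set.indicator {q : ℝ×ℝ | ρ ≤ W R q.1 q.2}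
        (fun q => pdfR q.1 * pdfR q.2) q) ∂volume).toReal
      = ∫ q : ℝ×ℝ, Set.indicator {q : ℝ×ℝ | ρ ≤ W R q.1 q.2}
          (fun q => pdfR q.1 * pdfR q.2) q ∂volume := by
    rw [integral_eq_lintegral_of_nonneg_ae
      (ae_of_all _ fun q => Set.indicator_nonneg
        (fun q _ => mul_nonneg (pdfR_nonneg _) (pdfR_nonneg _)) q)
      (((measurable_pdfR.comp measurable_fst).mul
        (measurable_pdfR.comp measurable_snd)).indicator hSmeas).aestronglyMeasurable]
  rw [h3, h4]
  have h5 : ∀ q : ℝ×ℝ,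
      Set.indicator {q : ℝ×ℝ | ρ ≤ W R q.1 q.2} (fun q => pdfR q.1 * pdfR q.2) (ρ⁻¹ • q)
      = Set.indicator {q : ℝ×ℝ | 1 ≤ W R q.1 q.2 ∧ 0 ≤ q.1 ∧ 0 ≤ q.2}
          (fun q => Real.exp (-(q.1/ρ)) * Real.exp (-(q.2/ρ))) q := by
    intro q
    have hρ' : 0 < ρ⁻¹ := inv_pos.2 hρ
    have hfst : (ρ⁻¹ • q).1 = ρ⁻¹ * q.1 := rfl
    have hsnd : (ρ⁻¹ • q).2 = ρ⁻¹ * q.2 := rfl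
    have hWs : (ρ ≤ W R (ρ⁻¹ * q.1) (ρ⁻¹ * q.2)) ↔ 1 ≤ W R q.1 q.2 := by
      rw [W_scale hρ]; exact le_mul_iff_one_le_right hρ
    have hq1 : (0 ≤ ρ⁻¹ * q.1) ↔ 0 ≤ q.1 := by
      constructor <;> intro h
      · nlinarith
      · positivity
    have hq2 : (0 ≤ ρ⁻¹ * q.2) ↔ 0 ≤ q.2 := by
      constructor <;> intro h
      · nlinarith
      · positivity
    have hd1 : ρ⁻¹ * q.1 = q.1/ρ := inv_mul_eq_div _ _
    have hd2 : ρ⁻¹ * q.2 = q.2/ρ := inv_mul_eq_div _ _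
    have hq1d : (0 ≤ q.1 / ρ) ↔ 0 ≤ q.1 := by rw [← hd1]; exact hq1
    have hq2d : (0 ≤ q.2 / ρ) ↔ 0 ≤ q.2 := by rw [← hd2]; exact hq2
    rw [Set.indicator_apply, Set.indicator_apply]
    simp only [Set.mem_setOf_eq, hfst, hsnd, hWs, hq1, hq2]
    by_cases hW : 1 ≤ W R q.1 q.2 <;> by_cases h1 : 0 ≤ q.1 <;> by_cases h2 : 0 ≤ q.2 <;>
      simp [pdfR, hW, h1, h2, hq1, hq2, hd1, hd2, hfst, hsnd, hq1d, hq2d]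
  rw [show (∫ q : ℝ×ℝ, Set.indicator {q : ℝ×ℝ | 1 ≤ W R q.1 q.2 ∧ 0 ≤ q.1 ∧ 0 ≤ q.2}
      (fun q => Real.exp (-(q.1/ρ)) * Real.exp (-(q.2/ρ))) q)
    = ∫ q : ℝ×ℝ, Set.indicator {q : ℝ×ℝ | ρ ≤ W R q.1 q.2}
        (fun q => pdfR q.1 * pdfR q.2) (ρ⁻¹ • q) from (integral_congr_ae
          (ae_of_all _ fun q => (h5 q).symm)),
    Measure.integral_comp_inv_smul_of_nonneg volume _ hρ.le]
  have hfr : Module.finrank ℝ (ℝ×ℝ) = 2 := by simp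
  rw [hfr, smul_eq_mul]

/-- Lemma 5: the power outage probability `P^out(ρ) = P(W(X,Y) ≥ ρ)` of user 2 under hybrid
NOMA assisted OFDMA satisfies `ρ² · P^out(ρ) → (e^R - 1)² + τ` as `ρ → ∞`, where `X, Y` are
i.i.d. rate-1 exponential channel gains and
`τ = ∫₁^{e^R} (y - 1)(min{e^{2R}, g₂(y)} - max{1, g₁(y)}) dy`. -/
theorem stmt_13 {Ω : Type*} [MeasurableSpace Ω] (μ : Measure Ω) [IsProbabilityMeasure μ]
    (X Y : Ω → ℝ) (hX : Measurable X) (hY : Measurable Y) (hXY : IndepFun X Y μ)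
    (hXd : μ.map X = expMeasure 1) (hYd : μ.map Y = expMeasure 1)
    (R τ : ℝ) (hR : 0 < R)
    (hτ : τ = ∫ y in (1 : ℝ)..Real.exp R,
      (y - 1) * (min (Real.exp (2 * R)) (g2 R y) - max 1 (g1 R y))) :
    Tendsto (fun ρ : ℝ => ρ ^ 2 * (μ {ω | ρ ≤ W R (X ω) (Y ω)}).toReal)
      atTop (nhds ((Real.exp R - 1) ^ 2 + τ)) := by
  have hE1 : 1 < Real.exp R := one_lt_exp' hR
  set A := {q : ℝ×ℝ | 1 ≤ W R q.1 q.2 ∧ 0 ≤ q.1 ∧ 0 ≤ q.2} with hA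
  have hAm : MeasurableSet A := by
    apply MeasurableSet.inter (measurableSet_le measurable_const (measurable_W R))
    exact (measurableSet_le measurable_const measurable_fst).inter
      (measurableSet_le measurable_const measurable_snd)
  have hτ2 : τ = ∫ y in (1:ℝ)..Real.exp R,
      (y - 1) * (min (Real.exp (2*R)) (g2 R y) - 1) := by
    rw [hτ]
    apply intervalIntegral.integral_congr
    intro y hy
    rw [Set.uIcc_of_le hE1.le] at hy
    simp only
    rw [max_eq_left (g1_le_one hy.1 hy.2)]
  have hτnn : 0 ≤ τ := hτ2 ▸ tauint_nonneg hR
  have hvol2 : volume A = ENNReal.ofReal ((Real.exp R - 1)^2 + τ) := by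
    rw [hA, volA hR, J1 hR, J2 hR, J3 hR, ← hτ2,
      ← ENNReal.ofReal_add (by positivity) hτnn,
      ← ENNReal.ofReal_add (add_nonneg (by positivity) hτnn) (by positivity)]
    congr 1
    ring
  have hvolR : (volume A).toReal = (Real.exp R - 1)^2 + τ := by
    rw [hvol2, ENNReal.toReal_ofReal (add_nonneg (by positivity) hτnn)]
  have hfin : volume A ≠ ⊤ := by rw [hvol2]; exact ENNReal.ofReal_ne_top
  have hbound_int : Integrable (A.indicator (fun _ => (1:ℝ))) volume := by
    rw [integrable_indicator_iff hAm]
    exact integrableOn_const hfin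
  have hTend : Tendsto (fun ρ : ℝ => ∫ q : ℝ×ℝ,
      A.indicator (fun q => Real.exp (-(q.1/ρ)) * Real.exp (-(q.2/ρ))) q) atTop
      (nhds (∫ q : ℝ×ℝ, A.indicator (fun _ => (1:ℝ)) q)) := by
    apply tendsto_integral_filter_of_dominated_convergence (A.indicator (fun _ => (1:ℝ)))
    · filter_upwards with ρ
      exact (Measurable.indicator (by fun_prop) hAm).aestronglyMeasurable
    · filter_upwards [eventually_ge_atTop (1:ℝ)] with ρ hρ
      apply ae_of_all
      intro q
      rw [Set.indicator_apply, Set.indicator_apply]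
      split_ifs with hq
      · rcases hq with ⟨-, h1, h2⟩
        have hρ0 : (0:ℝ) < ρ := lt_of_lt_of_le one_pos hρ
        have e1 : Real.exp (-(q.1/ρ)) ≤ 1 :=
          Real.exp_le_one_iff.2 (neg_nonpos.2 (div_nonneg h1 hρ0.le))
        have e2 : Real.exp (-(q.2/ρ)) ≤ 1 :=
          Real.exp_le_one_iff.2 (neg_nonpos.2 (div_nonneg h2 hρ0.le))
        rw [Real.norm_eq_abs, abs_of_nonneg (by positivity)]
        exact mul_le_one₀ e1 (Real.exp_pos _).le e2
      · simp
    · exact hbound_int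
    · apply ae_of_all
      intro q
      by_cases hq : q ∈ A
      · simp only [Set.indicator_of_mem hq]
        have t1 : Tendsto (fun ρ:ℝ => q.1/ρ) atTop (nhds 0) := by
          simpa [div_eq_mul_inv] using tendsto_inv_atTop_zero.const_mul q.1
        have t2 : Tendsto (fun ρ:ℝ => q.2/ρ) atTop (nhds 0) := by
          simpa [div_eq_mul_inv] using tendsto_inv_atTop_zero.const_mul q.2
        have e1 : Tendsto (fun ρ:ℝ => Real.exp (-(q.1/ρ))) atTop (nhds 1) := by
          have := (Real.continuous_exp.tendsto 0).comp (by simpa using t1.neg :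
            Tendsto (fun ρ:ℝ => -(q.1/ρ)) atTop (nhds 0))
          simpa [Function.comp_def] using this
        have e2 : Tendsto (fun ρ:ℝ => Real.exp (-(q.2/ρ))) atTop (nhds 1) := by
          have := (Real.continuous_exp.tendsto 0).comp (by simpa using t2.neg :
            Tendsto (fun ρ:ℝ => -(q.2/ρ)) atTop (nhds 0))
          simpa [Function.comp_def] using this
        simpa using e1.mul e2
      · simp only [Set.indicator_of_notMem hq]
        exact tendsto_const_nhds
  have hone : (∫ q : ℝ×ℝ, A.indicator (fun _ => (1:ℝ)) q) = (volume A).toReal := by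
    simpa [measureReal_def, Pi.one_def] using integral_indicator_one (μ := (volume : Measure (ℝ×ℝ))) hAm
  rw [hone, hvolR] at hTend
  apply hTend.congr'
  filter_upwards [eventually_gt_atTop (0:ℝ)] with ρ hρ
  exact (prob_eq μ X Y hX hY hXY hXd hYd R hρ).symm
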